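/- Let A be a bounded self-adjoint operator on a complex Hilbert space and y ⟂ ker A. Then for every ε > 0 there exists a₀ > 0 such that for all 0 < a < a₀, ‖(A + iaI)⁻¹ A y − y‖ < ε. -/

import Mathlib

open Complex

theorem stmt5 {H : Type*} [NormedAddCommGroup H] [InnerProductSpace ℂ H] [CompleteSpace H]
    (A : H →L[ℂ] H) (hA : IsSelfAdjoint A) (y : H)
    (hy : ∀ u : H, A u = 0 → (inner ℂ y u : ℂ) = 0)
    (ε : ℝ) (hε : 0 < ε) :
    ∃ a₀ > 0, ∀ a : ℝ, 0 < a → a < a₀ →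
      ‖Ring.inverse (A + (Complex.I * (a : ℂ)) • (1 : H →L[ℂ] H)) (A y) - y‖ < ε := by
  have hsym : ∀ u v : H, (inner ℂ (A u) v : ℂ) = inner ℂ u (A v) := fun u v => hA.isSymmetric u v
  -- squared norm identity
  have hBsq : ∀ (a : ℝ) (v : H),
      ‖(A + (Complex.I * (a:ℂ)) • (1 : H →L[ℂ] H)) v‖^2 = ‖A v‖^2 + a^2 * ‖v‖^2 := by
    intro a v
    have happ : (A + (Complex.I * (a:ℂ)) • (1 : H →L[ℂ] H)) v
        = A v + (Complex.I * (a:ℂ)) • v := by simp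
    have hre : (starRingEnd ℂ) (inner ℂ (A v) v : ℂ) = (inner ℂ (A v) v : ℂ) := by
      rw [inner_conj_symm, ← hsym]
    have him : (inner ℂ (A v) v : ℂ).im = 0 := by
      have := congrArg Complex.im hre
      simp only [Complex.conj_im] at this
      linarith
    have hcross : RCLike.re (inner ℂ (A v) ((Complex.I * (a:ℂ)) • v) : ℂ) = 0 := by
      rw [inner_smul_right]
      simp [RCLike.re_to_complex, Complex.mul_re, Complex.mul_im, him]
    rw [happ, @norm_add_sq ℂ, hcross, norm_smul]
    simp [mul_pow, sq_abs]
  have hle : ∀ (a : ℝ) (v : H),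
      ‖A v‖ ≤ ‖(A + (Complex.I * (a:ℂ)) • (1 : H →L[ℂ] H)) v‖ := by
    intro a v
    have h := hBsq a v
    nlinarith [norm_nonneg (A v), norm_nonneg ((A + (Complex.I * (a:ℂ)) • (1 : H →L[ℂ] H)) v),
      sq_nonneg (a * ‖v‖), sq_nonneg a, sq_nonneg ‖v‖, mul_self_nonneg (a*‖v‖)]
  -- invertibility
  have hunit : ∀ a : ℝ, 0 < a → IsUnit (A + (Complex.I * (a:ℂ)) • (1 : H →L[ℂ] H)) := by
    intro a ha
    have hnot : (-(Complex.I * (a:ℂ))) ∉ spectrum ℂ A := by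
      intro hmem
      have h := hA.mem_spectrum_eq_re hmem
      have := congrArg Complex.im h
      simp at this
      linarith
    rw [spectrum.notMem_iff] at hnot
    have heq : (algebraMap ℂ (H →L[ℂ] H)) (-(Complex.I * (a:ℂ))) - A
        = -(A + (Complex.I * (a:ℂ)) • (1 : H →L[ℂ] H)) := by
      rw [Algebra.algebraMap_eq_smul_one]
      module
    rw [heq, IsUnit.neg_iff] at hnot
    exact hnot
  -- density: y is in the closure of the range of A
  have hyc : y ∈ (LinearMap.range (A : H →ₗ[ℂ] H)).topologicalClosure := by
    rw [← Submodule.orthogonal_orthogonal_eq_closure]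
    rw [Submodule.mem_orthogonal]
    intro v hv
    have hAv : A v = 0 := by
      have h0 : (inner ℂ (A (A v)) v : ℂ) = 0 := hv (A (A v)) ⟨A v, rfl⟩
      have h1 : (inner ℂ (A v) (A v) : ℂ) = 0 := by
        rw [hsym, ← inner_conj_symm, h0, map_zero]
      exact inner_self_eq_zero.mp h1
    have h2 := hy v hAv
    rw [← inner_conj_symm, h2, map_zero]
  have hclos : y ∈ closure ((LinearMap.range (A : H →ₗ[ℂ] H) : Submodule ℂ H) : Set H) := hyc
  obtain ⟨z, hzmem, hzd⟩ := Metric.mem_closure_iff.mp hclos (ε/4) (by linarith)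
  obtain ⟨x, rfl⟩ := hzmem
  have hw : ‖y - A x‖ < ε/4 := by
    rw [← dist_eq_norm]; exact hzd
  refine ⟨ε / (2 * (‖x‖ + 1)), by positivity, ?_⟩
  intro a ha haa
  set B := A + (Complex.I * (a:ℂ)) • (1 : H →L[ℂ] H) with hBdef
  have hu := hunit a ha
  set R := Ring.inverse B with hRdef
  have hBR : B * R = 1 := Ring.mul_inverse_cancel _ hu
  have hRB : R * B = 1 := Ring.inverse_mul_cancel _ hu
  have hcomm : A * B = B * A := by
    simp only [hBdef, mul_add, add_mul, mul_one, one_mul, mul_smul_comm, smul_mul_assoc]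
  have hAR : A * R = R * A := by
    calc A * R = (R * B) * (A * R) := by rw [hRB, one_mul]
    _ = R * (B * A) * R := by noncomm_ring
    _ = R * (A * B) * R := by rw [hcomm]
    _ = (R * A) * (B * R) := by noncomm_ring
    _ = R * A := by rw [hBR, mul_one]
  have key1 : ∀ u : H, A (R u) = R (A u) := by
    intro u
    have := congrArg (fun T : H →L[ℂ] H => T u) hAR
    simpa [ContinuousLinearMap.mul_apply] using this
  have key2 : ∀ u : H, B (R u) = u := by
    intro u
    have := congrArg (fun T : H →L[ℂ] H => T u) hBR
    simpa [ContinuousLinearMap.mul_apply] using this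
  have key2' : ∀ u : H, R (B u) = u := by
    intro u
    have := congrArg (fun T : H →L[ℂ] H => T u) hRB
    simpa [ContinuousLinearMap.mul_apply] using this
  have key3 : ∀ v : H, ‖A v‖ ≤ ‖B v‖ := hle a
  set w := y - A x with hwdef
  -- second term
  have hsecond : R (A (A x)) - A x = (-(Complex.I * (a:ℂ))) • R (A x) := by
    have h1 : A (A x) = B (A x) + (-(Complex.I * (a:ℂ))) • (A x) := by
      simp only [hBdef, ContinuousLinearMap.add_apply, ContinuousLinearMap.smul_apply,
        ContinuousLinearMap.one_apply]
      module
    rw [h1, map_add, map_smul, key2']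
    abel
  have hsecond_norm : ‖R (A (A x)) - A x‖ ≤ a * ‖x‖ := by
    rw [hsecond, norm_smul]
    have h1 : ‖(-(Complex.I * (a:ℂ)))‖ = a := by
      simp [abs_of_pos ha]
    rw [h1]
    have h2 : ‖R (A x)‖ ≤ ‖x‖ := by
      rw [← key1]
      calc ‖A (R x)‖ ≤ ‖B (R x)‖ := key3 _
      _ = ‖x‖ := by rw [key2]
    exact mul_le_mul_of_nonneg_left h2 ha.le
  -- first term
  have hfirst : ‖R (A w) - w‖ ≤ 2 * ‖w‖ := by
    have h2 : ‖R (A w)‖ ≤ ‖w‖ := by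
      rw [← key1]
      calc ‖A (R w)‖ ≤ ‖B (R w)‖ := key3 _
      _ = ‖w‖ := by rw [key2]
    calc ‖R (A w) - w‖ ≤ ‖R (A w)‖ + ‖w‖ := norm_sub_le _ _
    _ ≤ 2 * ‖w‖ := by linarith
  -- combine
  have hdecomp : R (A y) - y = (R (A w) - w) + (R (A (A x)) - A x) := by
    have : A y = A w + A (A x) := by rw [hwdef, map_sub]; abel
    rw [this, map_add, hwdef]
    abel
  have hax : a * ‖x‖ < ε / 2 := by
    have h1 : a * ‖x‖ ≤ a * (‖x‖ + 1) := by nlinarith [norm_nonneg x]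
    have h2 : a * (‖x‖ + 1) < (ε / (2 * (‖x‖ + 1))) * (‖x‖ + 1) := by
      apply mul_lt_mul_of_pos_right haa
      positivity
    have h3 : (ε / (2 * (‖x‖ + 1))) * (‖x‖ + 1) = ε / 2 := by
      field_simp
    linarith
  calc ‖R (A y) - y‖ = ‖(R (A w) - w) + (R (A (A x)) - A x)‖ := by rw [hdecomp]
  _ ≤ ‖R (A w) - w‖ + ‖R (A (A x)) - A x‖ := norm_add_le _ _
  _ ≤ 2 * ‖w‖ + a * ‖x‖ := add_le_add hfirst hsecond_norm
  _ < 2 * (ε/4) + ε/2 := by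
      have : ‖w‖ < ε/4 := hw
      linarith
  _ = ε := by ring
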